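/- Let X be a matroid on the finite ground set N = {1,…,n} and let β ∈ ℝ_+^n satisfy 0 ≤ β_1 < β_2 < … < β_n (Assumption A1), with β_0 := 0. Then there exists an independent set of X, with incidence vector x* ∈ {0,1}^n, that is simultaneously optimal for all truncated weight functions: for every j ∈ {0,1,…,n}, x* maximizes Σ_{i = j+1}^n (β_i − β_j) x_i over the incidence vectors x of all independent sets of X. In particular (taking j = 0), x* is a maximum-weight independent set of X. -/

import Mathlib

lemma tele_sum (β : ℕ → ℝ) : ∀ i j : ℕ, j ≤ i →
    ∑ t ∈ Finset.Ico j i, (β (t+1) - β t) = β i - β j := by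
  intro i
  induction i with
  | zero => intro j hj; simp [Nat.le_zero.mp hj]
  | succ i ih =>
    intro j hj
    rcases Nat.lt_or_ge j (i+1) with h | h
    · have hji : j ≤ i := Nat.lt_succ_iff.mp h
      rw [Finset.sum_Ico_succ_top hji, ih j hji]; ring
    · have : j = i + 1 := le_antisymm hj h
      subst this; simp

lemma chain_bases (n : ℕ) (X : Matroid ℕ) (hE : X.E = ↑(Finset.Icc 1 n)) :
    ∀ k : ℕ, ∃ B : Finset ℕ, ∀ t : ℕ, n - k ≤ t →
      X.IsBasis (↑B ∩ Set.Ioc t n) (Set.Ioc t n) := by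
  have hsub : ∀ t : ℕ, Set.Ioc t n ⊆ X.E := by
    intro t x hx
    have h1 := hx.1; have h2 := hx.2
    rw [hE]; simp only [Finset.coe_Icc, Set.mem_Icc]
    omega
  intro k
  induction k with
  | zero =>
    refine ⟨∅, fun t ht => ?_⟩
    have : Set.Ioc t n = (∅ : Set ℕ) := by
      ext x; simp; omega
    simp [this]
  | succ k ih =>
    obtain ⟨B, hB⟩ := ih
    by_cases hkn : n ≤ k
    · exact ⟨B, fun t ht => hB t (by omega)⟩
    have hBk := hB (n - k) le_rfl
    have hmono : Set.Ioc (n - k) n ⊆ Set.Ioc (n - (k+1)) n :=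
      Set.Ioc_subset_Ioc_left (by omega)
    obtain ⟨B', hB', hsubB'⟩ := hBk.indep.subset_isBasis_of_subset
      (hBk.subset.trans hmono) (hsub _)
    have hB'fin : B'.Finite := (Set.finite_Ioc (n - (k+1)) n).subset hB'.subset
    refine ⟨hB'fin.toFinset, fun t ht => ?_⟩
    rcases Nat.lt_or_ge t (n - k) with h | h
    · have htk : t = n - (k+1) := by omega
      subst htk
      have : (↑hB'fin.toFinset : Set ℕ) ∩ Set.Ioc (n - (k+1)) n = B' := by
        rw [Set.Finite.coe_toFinset]
        exact Set.inter_eq_self_of_subset_left hB'.subset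
      rw [this]; exact hB'
    · have hb := hB t h
      have hIB' : ↑B ∩ Set.Ioc t n ⊆ B' := fun x hx =>
        hsubB' ⟨hx.1, Set.Ioc_subset_Ioc_left h hx.2⟩
      have key : B' ∩ Set.Ioc t n = ↑B ∩ Set.Ioc t n :=
        hb.inter_eq_of_subset_indep hIB' hB'.indep
      rw [Set.Finite.coe_toFinset, key]
      exact hb

/-- under Assumption A1 (`0 ≤ β_1 < β_2 < ⋯ < β_n`, `β_0 = 0`),
there is an independent set of the matroid `X` that simultaneously maximizes all
truncated weight functions `x ↦ ∑_{i > j} (β_i - β_j) x_i`, `j ∈ {0,1,…,n}`;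
in particular (taking `j = 0`) it is a maximum-weight independent set of `X`. -/
theorem exists_simultaneous_greedy_optimum (n : ℕ) (X : Matroid ℕ)
    (hE : X.E = ↑(Finset.Icc 1 n))
    (β : ℕ → ℝ) (hβ0 : β 0 = 0) (hβ1 : 0 ≤ β 1)
    (hβstrict : ∀ i j : ℕ, 1 ≤ i → i < j → j ≤ n → β i < β j) :
    ∃ Astar : Finset ℕ, X.Indep ↑Astar ∧
      (∀ j : ℕ, j ≤ n → ∀ A : Finset ℕ, X.Indep ↑A →
        ∑ i ∈ A.filter (fun i => j < i), (β i - β j)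
          ≤ ∑ i ∈ Astar.filter (fun i => j < i), (β i - β j)) ∧
      (∀ A : Finset ℕ, X.Indep ↑A → ∑ i ∈ A, β i ≤ ∑ i ∈ Astar, β i) := by
  obtain ⟨B, hB⟩ := chain_bases n X hE n
  have hB' : ∀ t : ℕ, X.IsBasis (↑B ∩ Set.Ioc t n) (Set.Ioc t n) :=
    fun t => hB t (by omega)
  set Astar : Finset ℕ := B.filter (fun i => 0 < i ∧ i ≤ n) with hAstar
  have hAcoe : (↑Astar : Set ℕ) = ↑B ∩ Set.Ioc 0 n := by
    ext x; simp [hAstar, Set.mem_Ioc]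
  have hAindep : X.Indep ↑Astar := by rw [hAcoe]; exact (hB' 0).indep
  have hAground : (↑Astar : Set ℕ) ⊆ Set.Icc 1 n := by
    rw [hAcoe]; intro x hx; exact ⟨hx.2.1, hx.2.2⟩
  -- membership bound for any independent A
  have hground : ∀ A : Finset ℕ, X.Indep ↑A → ∀ i ∈ A, 1 ≤ i ∧ i ≤ n := by
    intro A hA i hi
    have := hA.subset_ground hi
    rw [hE] at this
    simpa using this
  -- key cardinality comparison
  have hcard : ∀ (A : Finset ℕ), X.Indep ↑A → ∀ t : ℕ,
      (A.filter (fun i => t < i)).card ≤ (Astar.filter (fun i => t < i)).card := by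
    intro A hA t
    -- Astar.filter (t<·) as a set is ↑B ∩ Ioc t n
    have h1 : (↑(Astar.filter (fun i => t < i)) : Set ℕ) = ↑B ∩ Set.Ioc t n := by
      ext x
      simp only [Finset.coe_filter, Set.mem_setOf_eq, Finset.mem_filter, hAstar,
        Set.mem_inter_iff, Finset.mem_coe, Set.mem_Ioc]
      constructor
      · rintro ⟨⟨hxB, h0, hn⟩, ht⟩; exact ⟨hxB, ht, hn⟩
      · rintro ⟨hxB, ht, hn⟩; exact ⟨⟨hxB, by omega, hn⟩, ht⟩
    have h2 : (↑(A.filter (fun i => t < i)) : Set ℕ) ⊆ Set.Ioc t n := by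
      intro x hx
      simp only [Finset.coe_filter, Set.mem_setOf_eq] at hx
      exact ⟨hx.2, (hground A hA x hx.1).2⟩
    have h3 : X.Indep ↑(A.filter (fun i => t < i)) := by
      apply hA.subset
      intro x hx
      simp only [Finset.coe_filter, Set.mem_setOf_eq] at hx
      exact Finset.mem_coe.mpr hx.1
    obtain ⟨J, hJ, hsubJ⟩ := h3.subset_isBasis_of_subset h2 ((hB' t).subset_ground)
    have hcardle : (↑(A.filter (fun i => t < i)) : Set ℕ).encard ≤
        (↑(Astar.filter (fun i => t < i)) : Set ℕ).encard := by
      rw [h1]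
      calc (↑(A.filter (fun i => t < i)) : Set ℕ).encard ≤ J.encard :=
            Set.encard_le_encard hsubJ
        _ = (↑B ∩ Set.Ioc t n).encard := hJ.encard_eq_encard (hB' t)
    rw [Set.encard_coe_eq_coe_finsetCard, Set.encard_coe_eq_coe_finsetCard] at hcardle
    exact_mod_cast hcardle
  -- Abel summation identity
  have habel : ∀ (A : Finset ℕ), X.Indep ↑A → ∀ j : ℕ,
      ∑ i ∈ A.filter (fun i => j < i), (β i - β j)
        = ∑ t ∈ Finset.Ico j n, (β (t+1) - β t) * (A.filter (fun i => t < i)).card := by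
    intro A hA j
    have step1 : ∀ i ∈ A.filter (fun i => j < i),
        β i - β j = ∑ t ∈ (Finset.Ico j n).filter (fun t => t < i), (β (t+1) - β t) := by
      intro i hi
      simp only [Finset.mem_filter] at hi
      have hin : i ≤ n := (hground A hA i hi.1).2
      have : (Finset.Ico j n).filter (fun t => t < i) = Finset.Ico j i := by
        ext t; simp only [Finset.mem_filter, Finset.mem_Ico]; omega
      rw [this, tele_sum β i j (le_of_lt hi.2)]
    rw [Finset.sum_congr rfl step1]
    rw [Finset.sum_comm' (s := A.filter (fun i => j < i))
      (t := fun i => (Finset.Ico j n).filter (fun t => t < i))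
      (t' := Finset.Ico j n)
      (s' := fun t => A.filter (fun i => t < i)) ?_]
    · apply Finset.sum_congr rfl
      intro t ht
      rw [Finset.sum_const, nsmul_eq_mul, mul_comm]
    · intro i t
      simp only [Finset.mem_filter, Finset.mem_Ico]
      constructor
      · intro h
        obtain ⟨⟨hiA, hji⟩, ⟨hjt, htn⟩, hti⟩ := h
        exact ⟨⟨hiA, hti⟩, hjt, htn⟩
      · intro h
        obtain ⟨⟨hiA, hti⟩, hjt, htn⟩ := h
        exact ⟨⟨hiA, lt_of_le_of_lt hjt hti⟩, ⟨hjt, htn⟩, hti⟩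
  refine ⟨Astar, hAindep, ?_, ?_⟩
  · intro j hj A hA
    rw [habel A hA j, habel Astar hAindep j]
    apply Finset.sum_le_sum
    intro t ht
    simp only [Finset.mem_Ico] at ht
    have hd : 0 ≤ β (t+1) - β t := by
      rcases Nat.eq_zero_or_pos t with h0 | h0
      · subst h0; rw [hβ0]; simpa using hβ1
      · have := hβstrict t (t+1) h0 (Nat.lt_succ_self t) (by omega)
        linarith
    have := hcard A hA t
    have hc : ((A.filter (fun i => t < i)).card : ℝ)
        ≤ ((Astar.filter (fun i => t < i)).card : ℝ) := by exact_mod_cast this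
    exact mul_le_mul_of_nonneg_left hc hd
  · intro A hA
    have h0 : ∀ (C : Finset ℕ), X.Indep ↑C → C.filter (fun i => 0 < i) = C := by
      intro C hC
      apply Finset.filter_true_of_mem
      intro i hi
      have := (hground C hC i hi).1; omega
    have key := habel A hA 0
    have key2 := habel Astar hAindep 0
    have main : ∑ i ∈ A.filter (fun i => 0 < i), (β i - β 0)
        ≤ ∑ i ∈ Astar.filter (fun i => 0 < i), (β i - β 0) := by
      rw [key, key2]
      apply Finset.sum_le_sum
      intro t ht
      simp only [Finset.mem_Ico] at ht
      have hd : 0 ≤ β (t+1) - β t := by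
        rcases Nat.eq_zero_or_pos t with h0' | h0'
        · subst h0'; rw [hβ0]; simpa using hβ1
        · have := hβstrict t (t+1) h0' (Nat.lt_succ_self t) (by omega)
          linarith
      have hc : ((A.filter (fun i => t < i)).card : ℝ)
          ≤ ((Astar.filter (fun i => t < i)).card : ℝ) := by
        exact_mod_cast hcard A hA t
      exact mul_le_mul_of_nonneg_left hc hd
    rw [h0 A hA, h0 Astar hAindep, hβ0] at main
    simpa using main
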